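/- Let 𝔤 be a complex semisimple Lie algebra, 𝔭 a parabolic subalgebra with nilradical 𝔯 and Levi 𝔩, λ' ∈ 𝔥*. There is an algebra isomorphism 𝒰^{λ'} ∗ 𝒰(𝔭) ≅ 𝒰^{λ'} ⊗ 𝒰(𝔭) sending 1⊗x ↦ 1⊗x + x⊗1 and y⊗1 ↦ y⊗1, under which modules over the smash product on which 1⊗𝔭 acts integrably correspond to 𝒰^{λ'}⊗𝒰(𝔭)-modules on which the diagonal Δ𝔭 acts integrably. -/

import Mathlib

/-!
Statement 7: there is an algebra isomorphism 𝒰^{λ'} ∗ 𝒰(𝔭) ≅ 𝒰^{λ'} ⊗ 𝒰(𝔭) with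
1⊗x ↦ 1⊗x + x⊗1 and y⊗1 ↦ y⊗1, under which smash-product modules with integrable
action of 1⊗𝔭 correspond to 𝒰^{λ'} ⊗ 𝒰(𝔭)-modules with integrable diagonal action Δ𝔭.
Integrability of an action of a family of operators is modeled by local finiteness.
Here 𝒰^{λ'} = 𝒰(𝔤)/(I_{λ'}) is modeled as a quotient algebra A of 𝒰(𝔤).
-/

open UniversalEnvelopingAlgebra

/-- The smash product `A ∗ 𝒰(𝔭)` for the (inner) adjoint action of 𝔭 on the central
quotient `A = 𝒰^{λ'}`, where `θ : 𝔭 → A` is the image of 𝔭 in the quotient. -/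
structure SmashProduct (A : Type) [Ring A] [Algebra ℂ A]
    (L : Type) [LieRing L] [LieAlgebra ℂ L] (θ : L →ₗ[ℂ] A)
    (S : Type) [Ring S] [Algebra ℂ S] where
  jA : A →ₐ[ℂ] S
  jU : UniversalEnvelopingAlgebra ℂ L →ₐ[ℂ] S
  smash_rel : ∀ (x : L) (a : A),
    jU (ι ℂ x) * jA a = jA (θ x * a - a * θ x) + jA a * jU (ι ℂ x)
  pbw : TensorProduct ℂ A (UniversalEnvelopingAlgebra ℂ L) ≃ₗ[ℂ] S
  pbw_apply : ∀ (a : A) (u : UniversalEnvelopingAlgebra ℂ L),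
    pbw (a ⊗ₜ[ℂ] u) = jA a * jU u

/-- Local finiteness (integrability) of a set of operators on `M`: every vector lies in
a finite-dimensional subspace stable under all the operators. -/
def LocallyFiniteAction {M : Type} [AddCommGroup M] [Module ℂ M]
    (s : Set (Module.End ℂ M)) : Prop :=
  ∀ m : M, ∃ N : Submodule ℂ M, FiniteDimensional ℂ N ∧ m ∈ N ∧
    ∀ T ∈ s, ∀ n ∈ N, T n ∈ N

section Aux

attribute [local instance 100] LieRing.ofAssociativeRing

variable {A : Type} [Ring A] [Algebra ℂ A]
variable {L : Type} [LieRing L] [LieAlgebra ℂ L]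
variable {S : Type} [Ring S] [Algebra ℂ S]

local notation "𝒰" => UniversalEnvelopingAlgebra ℂ L
local notation "X" => TensorProduct ℂ A (UniversalEnvelopingAlgebra ℂ L)

/-- An induction principle for the universal enveloping algebra. -/
theorem uea_induction {P : 𝒰 → Prop}
    (halg : ∀ r : ℂ, P (algebraMap ℂ _ r))
    (hι : ∀ x : L, P (ι ℂ x))
    (hmul : ∀ a b, P a → P b → P (a * b))
    (hadd : ∀ a b, P a → P b → P (a + b)) :
    ∀ u, P u := by
  intro u
  obtain ⟨t, rfl⟩ : ∃ t, UniversalEnvelopingAlgebra.mkAlgHom ℂ L t = u := RingCon.mk'_surjective _ u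
  induction t using TensorAlgebra.induction with
  | algebraMap r => simpa using halg r
  | ι x => exact hι x
  | mul a b ha hb => rw [map_mul]; exact hmul _ _ ha hb
  | add a b ha hb => rw [map_add]; exact hadd _ _ ha hb

variable {θ : L →ₗ[ℂ] A}

/-- `ρ x = jU (ι x) - jA (θ x)` as a Lie algebra hom into `S`. -/
noncomputable def rhoHom (sp : SmashProduct A L θ S)
    (hbr : ∀ x y : L, θ ⁅x, y⁆ = θ x * θ y - θ y * θ x) : L →ₗ⁅ℂ⁆ S where
  toLinearMap := sp.jU.toLinearMap ∘ₗ (ι ℂ : L →ₗ⁅ℂ⁆ 𝒰).toLinearMap - sp.jA.toLinearMap ∘ₗ θ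
  map_lie' := by
    intro x y
    show (sp.jU.toLinearMap ∘ₗ (ι ℂ : L →ₗ⁅ℂ⁆ 𝒰).toLinearMap - sp.jA.toLinearMap ∘ₗ θ) ⁅x, y⁆
      = ⁅(sp.jU.toLinearMap ∘ₗ (ι ℂ : L →ₗ⁅ℂ⁆ 𝒰).toLinearMap - sp.jA.toLinearMap ∘ₗ θ) x,
        (sp.jU.toLinearMap ∘ₗ (ι ℂ : L →ₗ⁅ℂ⁆ 𝒰).toLinearMap - sp.jA.toLinearMap ∘ₗ θ) y⁆
    simp only [LinearMap.sub_apply, LinearMap.coe_comp, Function.comp_apply,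
      LieHom.coe_toLinearMap, AlgHom.toLinearMap_apply]
    set a := sp.jU (ι ℂ x)
    set b := sp.jU (ι ℂ y)
    set c := sp.jA (θ x)
    set d := sp.jA (θ y)
    have h1 : sp.jU (ι ℂ ⁅x, y⁆) = a * b - b * a := by
      rw [LieHom.map_lie, LieRing.of_associative_ring_bracket, map_sub, map_mul, map_mul]
    have h2 : sp.jA (θ ⁅x, y⁆) = c * d - d * c := by
      rw [hbr, map_sub, map_mul, map_mul]
    have had : a * d = (c * d - d * c) + d * a := by
      have h := sp.smash_rel x (θ y)
      rw [map_sub, map_mul, map_mul] at h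
      exact h
    have hbc : b * c = (d * c - c * d) + c * b := by
      have h := sp.smash_rel y (θ x)
      rw [map_sub, map_mul, map_mul] at h
      exact h
    rw [h1, h2, LieRing.of_associative_ring_bracket]
    have expand : (a - c) * (b - d) - (b - d) * (a - c)
        = (a * b - b * a) + ((d * a - a * d) + ((b * c - c * b) + (c * d - d * c))) := by
      noncomm_ring
    rw [expand, had, hbc]
    noncomm_ring

/-- The lift `Ψ : 𝒰(L) → S` of `ρ`. -/
noncomputable def psiHom (sp : SmashProduct A L θ S)
    (hbr : ∀ x y : L, θ ⁅x, y⁆ = θ x * θ y - θ y * θ x) : 𝒰 →ₐ[ℂ] S :=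
  UniversalEnvelopingAlgebra.lift ℂ (rhoHom sp hbr)

theorem psiHom_ι (sp : SmashProduct A L θ S) (hbr) (x : L) :
    psiHom sp hbr (ι ℂ x) = sp.jU (ι ℂ x) - sp.jA (θ x) := by
  rw [psiHom, UniversalEnvelopingAlgebra.lift_ι_apply]
  rfl

theorem psi_commute (sp : SmashProduct A L θ S) (hbr) (a : A)
    (u : 𝒰) : Commute (sp.jA a) (psiHom sp hbr u) := by
  induction u using uea_induction with
  | halg r =>
    rw [AlgHom.commutes]
    exact (Algebra.commutes r (sp.jA a)).symm
  | hι x =>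
    rw [psiHom_ι]
    show sp.jA a * _ = _ * sp.jA a
    rw [mul_sub, sub_mul, sp.smash_rel x a, map_sub, map_mul, map_mul]
    noncomm_ring
  | hmul u v hu hv => rw [map_mul]; exact hu.mul_right hv
  | hadd u v hu hv => rw [map_add]; exact hu.add_right hv

/-- `x ↦ θ x ⊗ 1 + 1 ⊗ ι x` as a Lie algebra hom into `A ⊗ 𝒰(L)`. -/
noncomputable def phi0 (θ : L →ₗ[ℂ] A)
    (hbr : ∀ x y : L, θ ⁅x, y⁆ = θ x * θ y - θ y * θ x) : L →ₗ⁅ℂ⁆ X where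
  toLinearMap := ((TensorProduct.mk ℂ A 𝒰).flip 1) ∘ₗ θ
    + (TensorProduct.mk ℂ A 𝒰 1) ∘ₗ (ι ℂ : L →ₗ⁅ℂ⁆ 𝒰).toLinearMap
  map_lie' := by
    intro x y
    simp only [AddHom.toFun_eq_coe, LinearMap.coe_toAddHom, LinearMap.add_apply,
      LinearMap.coe_comp, Function.comp_apply, LieHom.coe_toLinearMap,
      TensorProduct.mk_apply, LinearMap.flip_apply,
      LieRing.of_associative_ring_bracket]
    rw [hbr, LieHom.map_lie, LieRing.of_associative_ring_bracket]
    simp only [TensorProduct.sub_tmul, TensorProduct.tmul_sub, mul_add, add_mul,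
      Algebra.TensorProduct.tmul_mul_tmul, mul_one, one_mul]
    abel

/-- The lift `Φ : 𝒰(L) → A ⊗ 𝒰(L)` of `phi0`. -/
noncomputable def PhiHom (θ : L →ₗ[ℂ] A)
    (hbr : ∀ x y : L, θ ⁅x, y⁆ = θ x * θ y - θ y * θ x) : 𝒰 →ₐ[ℂ] X :=
  UniversalEnvelopingAlgebra.lift ℂ (phi0 θ hbr)

theorem PhiHom_ι (θ : L →ₗ[ℂ] A) (hbr) (x : L) :
    PhiHom θ hbr (ι ℂ x) = θ x ⊗ₜ[ℂ] 1 + (1 : A) ⊗ₜ[ℂ] ι ℂ x := by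
  rw [PhiHom, UniversalEnvelopingAlgebra.lift_ι_apply]
  rfl

/-- The linear map `T : a ⊗ u ↦ (a ⊗ 1) * Φ u`. -/
noncomputable def Tmap (θ : L →ₗ[ℂ] A)
    (hbr : ∀ x y : L, θ ⁅x, y⁆ = θ x * θ y - θ y * θ x) : X →ₗ[ℂ] X :=
  TensorProduct.lift
    (((LinearMap.mul ℂ X).comp ((TensorProduct.mk ℂ A 𝒰).flip 1)).compl₂
      (PhiHom θ hbr).toLinearMap)

theorem Tmap_tmul (θ : L →ₗ[ℂ] A) (hbr) (a : A) (u : 𝒰) :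
    Tmap θ hbr (a ⊗ₜ[ℂ] u) = (a ⊗ₜ[ℂ] (1 : 𝒰)) * PhiHom θ hbr u := rfl

variable (θ) (hbr : ∀ x y : L, θ ⁅x, y⁆ = θ x * θ y - θ y * θ x)

theorem Tmap_mul_right (u : 𝒰) (ξ : X) :
    Tmap θ hbr (ξ * ((1 : A) ⊗ₜ[ℂ] u)) = Tmap θ hbr ξ * PhiHom θ hbr u := by
  induction ξ using TensorProduct.induction_on with
  | zero => simp
  | tmul a v =>
    rw [Algebra.TensorProduct.tmul_mul_tmul, mul_one, Tmap_tmul, Tmap_tmul, map_mul, mul_assoc]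
  | add ξ η hξ hη => rw [add_mul, map_add, map_add, hξ, hη, add_mul]

theorem Tmap_mul_left (b : A) (ξ : X) :
    Tmap θ hbr ((b ⊗ₜ[ℂ] (1 : 𝒰)) * ξ) = (b ⊗ₜ[ℂ] (1 : 𝒰)) * Tmap θ hbr ξ := by
  induction ξ using TensorProduct.induction_on with
  | zero => simp
  | tmul a v =>
    rw [Algebra.TensorProduct.tmul_mul_tmul, one_mul, Tmap_tmul, Tmap_tmul, ← mul_assoc,
      Algebra.TensorProduct.tmul_mul_tmul, mul_one]
  | add ξ η hξ hη => rw [mul_add, map_add, map_add, hξ, hη, mul_add]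

theorem Tmap_surjective : Function.Surjective (Tmap θ hbr) := by
  set W := LinearMap.range (Tmap θ hbr) with hW
  have h2 : ∀ ζ ∈ W, ∀ u, ζ * PhiHom θ hbr u ∈ W := by
    rintro ζ ⟨ξ, rfl⟩ u
    exact ⟨ξ * ((1 : A) ⊗ₜ[ℂ] u), Tmap_mul_right θ hbr u ξ⟩
  have h3 : ∀ (b : A), ∀ ζ ∈ W, (b ⊗ₜ[ℂ] (1 : 𝒰)) * ζ ∈ W := by
    rintro b ζ ⟨ξ, rfl⟩
    exact ⟨(b ⊗ₜ[ℂ] (1 : 𝒰)) * ξ, Tmap_mul_left θ hbr b ξ⟩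
  have h1 : ∀ a : A, a ⊗ₜ[ℂ] (1 : 𝒰) ∈ W := by
    intro a
    exact ⟨a ⊗ₜ[ℂ] (1 : 𝒰), by rw [Tmap_tmul, map_one, mul_one]⟩
  have hQ : ∀ v : 𝒰, ∀ u : 𝒰, (1 : A) ⊗ₜ[ℂ] u ∈ W → (1 : A) ⊗ₜ[ℂ] (u * v) ∈ W := by
    intro v
    induction v using uea_induction with
    | halg r =>
      intro u hu
      have h : (1 : A) ⊗ₜ[ℂ] (u * algebraMap ℂ 𝒰 r) = r • ((1 : A) ⊗ₜ[ℂ] u) := by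
        rw [← Algebra.commutes, ← Algebra.smul_def, TensorProduct.tmul_smul]
      rw [h]
      exact W.smul_mem r hu
    | hι x =>
      intro u hu
      have key : (1 : A) ⊗ₜ[ℂ] (u * ι ℂ x)
          = ((1 : A) ⊗ₜ[ℂ] u) * PhiHom θ hbr (ι ℂ x)
            - (θ x ⊗ₜ[ℂ] (1 : 𝒰)) * ((1 : A) ⊗ₜ[ℂ] u) := by
        rw [PhiHom_ι, mul_add, Algebra.TensorProduct.tmul_mul_tmul,
          Algebra.TensorProduct.tmul_mul_tmul, Algebra.TensorProduct.tmul_mul_tmul,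
          one_mul, one_mul, one_mul, mul_one, mul_one]
        abel
      rw [key]
      exact W.sub_mem (h2 _ hu _) (h3 _ _ hu)
    | hmul v w hv hw =>
      intro u hu
      rw [← mul_assoc]
      exact hw _ (hv _ hu)
    | hadd v w hv hw =>
      intro u hu
      rw [mul_add, TensorProduct.tmul_add]
      exact W.add_mem (hv _ hu) (hw _ hu)
  have hpure : ∀ (a : A) (u : 𝒰), a ⊗ₜ[ℂ] u ∈ W := by
    intro a u
    have h1u : (1 : A) ⊗ₜ[ℂ] u ∈ W := by
      have h := hQ u 1 (h1 1)
      rwa [one_mul] at h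
    have h := h3 a _ h1u
    rwa [Algebra.TensorProduct.tmul_mul_tmul, mul_one, one_mul] at h
  intro z
  show z ∈ W
  induction z using TensorProduct.induction_on with
  | zero => exact W.zero_mem
  | tmul a u => exact hpure a u
  | add ξ η hξ hη => exact W.add_mem hξ hη

end Aux

set_option maxHeartbeats 1000000 in
theorem smash_iso_tensor_for_central_quotient
    (g : Type) [LieRing g] [LieAlgebra ℂ g]            -- the semisimple Lie algebra 𝔤
    (p : LieSubalgebra ℂ g)                             -- the parabolic subalgebra 𝔭
    (A : Type) [Ring A] [Algebra ℂ A]                   -- the central quotient 𝒰^{λ'}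
    (q : UniversalEnvelopingAlgebra ℂ g →ₐ[ℂ] A)        -- quotient map 𝒰(𝔤) → 𝒰^{λ'}
    (hq : Function.Surjective q)
    (θ : ↥p →ₗ[ℂ] A) (hθ : ∀ x : ↥p, θ x = q (ι ℂ (x : g)))
    (S : Type) [Ring S] [Algebra ℂ S]
    (sp : SmashProduct A ↥p θ S) :
    ∃ e : S ≃ₐ[ℂ] TensorProduct ℂ A (UniversalEnvelopingAlgebra ℂ ↥p),
      (∀ y : A, e (sp.jA y) = y ⊗ₜ[ℂ] 1) ∧
      (∀ x : ↥p, e (sp.jU (ι ℂ x)) = θ x ⊗ₜ[ℂ] 1 + (1 : A) ⊗ₜ[ℂ] ι ℂ x) ∧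
      -- module correspondence: a module over the smash product (given by σ) has
      -- integrable action of 1⊗𝔭 iff the corresponding 𝒰^{λ'} ⊗ 𝒰(𝔭)-module
      -- (given by σ ∘ e⁻¹) has integrable diagonal action Δ𝔭 = {x⊗1 + 1⊗x}:
      (∀ (M : Type) [AddCommGroup M] [Module ℂ M]
          (σ : S →ₐ[ℂ] Module.End ℂ M),
        LocallyFiniteAction {T | ∃ x : ↥p, T = σ (sp.jU (ι ℂ x))} ↔
        LocallyFiniteAction {T | ∃ x : ↥p,
          T = (σ.comp e.symm.toAlgHom) (θ x ⊗ₜ[ℂ] 1 + (1 : A) ⊗ₜ[ℂ] ι ℂ x)}) := by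
  have hbr : ∀ x y : ↥p, θ ⁅x, y⁆ = θ x * θ y - θ y * θ x := by
    intro x y
    rw [hθ, hθ, hθ]
    have hc : ((⁅x, y⁆ : ↥p) : g) = ⁅(x : g), (y : g)⁆ := rfl
    letI : LieRing (UniversalEnvelopingAlgebra ℂ g) := LieRing.ofAssociativeRing
    rw [hc, LieHom.map_lie, LieRing.of_associative_ring_bracket, map_sub, map_mul, map_mul]
  set Ψ := psiHom sp hbr with hΨ
  set G : TensorProduct ℂ A (UniversalEnvelopingAlgebra ℂ ↥p) →ₐ[ℂ] S :=
    Algebra.TensorProduct.lift sp.jA Ψ (fun a u => psi_commute sp hbr a u) with hG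
  have hGtmul : ∀ (a : A) (u : UniversalEnvelopingAlgebra ℂ ↥p),
      G (a ⊗ₜ[ℂ] u) = sp.jA a * Ψ u := by
    intro a u
    rw [hG]
    exact Algebra.TensorProduct.lift_tmul _ _ _ _ _
  have hGleft : ∀ y : A, G (y ⊗ₜ[ℂ] (1 : UniversalEnvelopingAlgebra ℂ ↥p)) = sp.jA y := by
    intro y
    rw [hGtmul, map_one, mul_one]
  have hGgen : ∀ x : ↥p,
      G (θ x ⊗ₜ[ℂ] 1 + (1 : A) ⊗ₜ[ℂ] ι ℂ x) = sp.jU (ι ℂ x) := by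
    intro x
    rw [map_add, hGtmul, hGtmul, map_one, mul_one, map_one, one_mul, hΨ, psiHom_ι]
    noncomm_ring
  have hGPhi : ∀ u, G (PhiHom θ hbr u) = sp.jU u := by
    intro u
    induction u using uea_induction with
    | halg r => rw [AlgHom.commutes, AlgHom.commutes, AlgHom.commutes]
    | hι x => rw [PhiHom_ι]; exact hGgen x
    | hmul u v hu hv => rw [map_mul, map_mul, map_mul, hu, hv]
    | hadd u v hu hv => rw [map_add, map_add, map_add, hu, hv]
  have hGT : ∀ ξ, G (Tmap θ hbr ξ) = sp.pbw ξ := by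
    intro ξ
    induction ξ using TensorProduct.induction_on with
    | zero => rw [map_zero, map_zero, map_zero]
    | tmul a u =>
      rw [Tmap_tmul, map_mul, hGleft, hGPhi, sp.pbw_apply]
    | add ξ η hξ hη => rw [map_add, map_add, map_add, hξ, hη]
  have hGsurj : Function.Surjective G := by
    intro s
    refine ⟨Tmap θ hbr (sp.pbw.symm s), ?_⟩
    rw [hGT, LinearEquiv.apply_symm_apply]
  have hGinj : Function.Injective G := by
    rw [injective_iff_map_eq_zero]
    intro z hz
    obtain ⟨ξ, rfl⟩ := Tmap_surjective θ hbr z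
    rw [hGT] at hz
    rw [(sp.pbw.map_eq_zero_iff).mp hz, map_zero]
  set E := AlgEquiv.ofBijective G ⟨hGinj, hGsurj⟩ with hE
  have hEapp : ∀ ξ, E ξ = G ξ := fun ξ => rfl
  refine ⟨E.symm, ?_, ?_, ?_⟩
  · intro y
    rw [AlgEquiv.symm_apply_eq, hEapp]
    exact (hGleft y).symm
  · intro x
    rw [AlgEquiv.symm_apply_eq, hEapp]
    exact (hGgen x).symm
  · intro M _ _ σ
    have hcomp : ∀ x : ↥p,
        (σ.comp E.symm.symm.toAlgHom) (θ x ⊗ₜ[ℂ] 1 + (1 : A) ⊗ₜ[ℂ] ι ℂ x)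
          = σ (sp.jU (ι ℂ x)) := by
      intro x
      simp only [AlgHom.coe_comp, Function.comp_apply, AlgEquiv.toAlgHom_eq_coe,
        AlgHom.coe_coe, AlgEquiv.symm_symm]
      show σ (E _) = _
      rw [hEapp, hGgen]
    have hsets : {T | ∃ x : ↥p, T = σ (sp.jU (ι ℂ x))}
        = {T | ∃ x : ↥p,
            T = (σ.comp E.symm.symm.toAlgHom) (θ x ⊗ₜ[ℂ] 1 + (1 : A) ⊗ₜ[ℂ] ι ℂ x)} := by
      ext T
      simp only [Set.mem_setOf_eq]
      constructor
      · rintro ⟨x, rfl⟩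
        exact ⟨x, (hcomp x).symm⟩
      · rintro ⟨x, rfl⟩
        exact ⟨x, hcomp x⟩
    rw [hsets]
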